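/- The matching polynomial of any finite graph has only real roots. -/

import Mathlib

open scoped Classical

/-- The number of matchings of `G` with exactly `k` edges. -/
noncomputable def matchingCount {V : Type} [Fintype V] [DecidableEq V]
    (G : SimpleGraph V) (k : ℕ) : ℕ :=
  ((G.edgeFinset.powersetCard k).filter
    (fun M => ∀ e ∈ M, ∀ f ∈ M, e ≠ f → ∀ v : V, v ∈ e → v ∉ f)).card

/-- The matching polynomial `μ_G` of `G`, evaluated at a complex number `x`. -/
noncomputable def matchingPolyEval {V : Type} [Fintype V] [DecidableEq V]
    (G : SimpleGraph V) (x : ℂ) : ℂ :=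
  ∑ k ∈ Finset.range (Fintype.card V / 2 + 1),
    (-1 : ℂ) ^ k * (matchingCount G k) * x ^ (Fintype.card V - 2 * k)

namespace HLaux

open Finset

variable {V : Type} [Fintype V] [DecidableEq V]

/-- matchings of `G` contained in the vertex set `s`. -/
noncomputable def mset (G : SimpleGraph V) (s : Finset V) : Finset (Finset (Sym2 V)) :=
  G.edgeFinset.powerset.filter (fun M =>
    (∀ e ∈ M, ∀ w, w ∈ e → w ∈ s) ∧
    (∀ e ∈ M, ∀ f ∈ M, e ≠ f → ∀ w, w ∈ e → w ∉ f))

noncomputable def mp (G : SimpleGraph V) (s : Finset V) (z : ℂ) : ℂ :=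
  ∑ M ∈ mset G s, (-1 : ℂ) ^ M.card * z ^ (s.card - 2 * M.card)

lemma mem_mset {G : SimpleGraph V} {s : Finset V} {M : Finset (Sym2 V)} :
    M ∈ mset G s ↔ M ⊆ G.edgeFinset ∧ (∀ e ∈ M, ∀ w, w ∈ e → w ∈ s) ∧
      (∀ e ∈ M, ∀ f ∈ M, e ≠ f → ∀ w, w ∈ e → w ∉ f) := by
  rw [mset, mem_filter, mem_powerset]

lemma two_card_le (G : SimpleGraph V) {s : Finset V} {M : Finset (Sym2 V)}
    (hM : M ∈ mset G s) : 2 * M.card ≤ s.card := by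
  classical
  rw [mset, mem_filter, mem_powerset] at hM
  obtain ⟨hsub, hcov, hdisj⟩ := hM
  set f : Sym2 V → Finset V := fun e => Finset.univ.filter (· ∈ e) with hf
  have hfe : ∀ e ∈ M, (f e).card = 2 := by
    intro e he
    have hne : ¬ e.IsDiag := by
      have := hsub he
      rw [SimpleGraph.mem_edgeFinset] at this
      exact G.not_isDiag_of_mem_edgeSet this
    induction e using Sym2.ind with
    | _ a b =>
      have hab : a ≠ b := by simpa using hne
      have : f s(a,b) = {a, b} := by
        ext w; simp [hf, Sym2.mem_iff]
      rw [this, card_insert_of_notMem (by simpa using hab), card_singleton]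
  have hdisj' : ∀ e ∈ M, ∀ g ∈ M, e ≠ g → Disjoint (f e) (f g) := by
    intro e he g hg hneq
    rw [Finset.disjoint_left]
    intro w hw hw'
    simp only [hf, mem_filter] at hw hw'
    exact hdisj e he g hg hneq w hw.2 hw'.2
  have hcard : (M.biUnion f).card = ∑ e ∈ M, (f e).card := card_biUnion hdisj'
  have hsum : ∑ e ∈ M, (f e).card = 2 * M.card := by
    rw [Finset.sum_congr rfl hfe]
    simp [mul_comm]
  have hsubs : M.biUnion f ⊆ s := by
    intro w hw
    rw [mem_biUnion] at hw
    obtain ⟨e, he, hwe⟩ := hw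
    simp only [hf, mem_filter] at hwe
    exact hcov e he w hwe.2
  calc 2 * M.card = (M.biUnion f).card := by rw [hcard, hsum]
    _ ≤ s.card := card_le_card hsubs


lemma mset_empty (G : SimpleGraph V) : mset G (∅ : Finset V) = {∅} := by
  ext M
  simp only [mset, mem_filter, mem_powerset, mem_singleton]
  constructor
  · rintro ⟨-, hcov, -⟩
    rw [Finset.eq_empty_iff_forall_notMem]
    intro e he
    exact absurd (hcov e he e.out.1 (Sym2.out_fst_mem e)) (Finset.notMem_empty _)
  · rintro rfl
    refine ⟨Finset.empty_subset _, ?_, ?_⟩ <;> simp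

lemma mp_empty (G : SimpleGraph V) (z : ℂ) : mp G (∅ : Finset V) z = 1 := by
  rw [mp, mset_empty]
  simp

lemma mp_rec (G : SimpleGraph V) {s : Finset V} {v : V} (hv : v ∈ s) (z : ℂ) :
    mp G s z = z * mp G (s.erase v) z
      - ∑ u ∈ G.neighborFinset v ∩ s, mp G ((s.erase v).erase u) z := by
  classical
  have hcard1 : (s.erase v).card = s.card - 1 := card_erase_of_mem hv
  have hs1 : 1 ≤ s.card := card_pos.2 ⟨v, hv⟩
  rw [mp, ← sum_filter_add_sum_filter_not (mset G s) (fun M => ∀ e ∈ M, v ∉ e)]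
  have hA : (mset G s).filter (fun M => ∀ e ∈ M, v ∉ e) = mset G (s.erase v) := by
    ext M
    simp only [mem_filter, mem_mset]
    constructor
    · rintro ⟨⟨hsub, hcov, hd⟩, hnv⟩
      refine ⟨hsub, fun e he w hw => mem_erase.2 ⟨?_, hcov e he w hw⟩, hd⟩
      rintro rfl; exact hnv e he hw
    · rintro ⟨hsub, hcov, hd⟩
      exact ⟨⟨hsub, fun e he w hw => (mem_erase.1 (hcov e he w hw)).2, hd⟩,
        fun e he hve => (mem_erase.1 (hcov e he v hve)).1 rfl⟩
  have hApart : ∑ M ∈ (mset G s).filter (fun M => ∀ e ∈ M, v ∉ e),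
      (-1 : ℂ) ^ M.card * z ^ (s.card - 2 * M.card) = z * mp G (s.erase v) z := by
    rw [hA, mp, mul_sum]
    refine sum_congr rfl fun M hM => ?_
    have h1 := two_card_le G hM
    have : s.card - 2 * M.card = ((s.erase v).card - 2 * M.card) + 1 := by omega
    rw [this, pow_succ]; ring
  rw [hApart]
  have hB : (mset G s).filter (fun M => ¬ ∀ e ∈ M, v ∉ e)
      = (G.neighborFinset v ∩ s).biUnion
        (fun u => (mset G s).filter (fun M => s(v, u) ∈ M)) := by
    ext M
    simp only [mem_filter, mem_biUnion, mem_inter, SimpleGraph.mem_neighborFinset]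
    constructor
    · rintro ⟨hM, hex⟩
      push_neg at hex
      obtain ⟨e, he, hve⟩ := hex
      refine ⟨Sym2.Mem.other hve, ⟨?_, ?_⟩, ⟨hM, ?_⟩⟩
      · have hee : e ∈ G.edgeFinset := (mem_mset.1 hM).1 he
        rw [SimpleGraph.mem_edgeFinset] at hee
        have := Sym2.other_spec hve
        rw [← this] at hee
        exact hee
      · exact (mem_mset.1 hM).2.1 e he _ (Sym2.other_mem hve)
      · rw [Sym2.other_spec hve]; exact he
    · rintro ⟨u, ⟨hadj, hus⟩, hM, heM⟩
      refine ⟨hM, ?_⟩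
      push_neg
      exact ⟨s(v, u), heM, Sym2.mem_mk_left v u⟩
  have hdisj : (↑(G.neighborFinset v ∩ s) : Set V).PairwiseDisjoint
      (fun u => (mset G s).filter (fun M => s(v, u) ∈ M)) := by
    intro u hu u' hu' hne
    simp only [Function.onFun]
    rw [disjoint_left]
    intro M hM hM'
    rw [mem_filter] at hM hM'
    obtain ⟨hMm, he1⟩ := hM
    obtain ⟨-, he2⟩ := hM'
    have hd := (mem_mset.1 hMm).2.2
    have hneq : s(v, u) ≠ s(v, u') := fun h => hne (Sym2.congr_right.1 h)
    exact hd _ he1 _ he2 hneq v (Sym2.mem_mk_left v u) (Sym2.mem_mk_left v u')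
  rw [hB, sum_biUnion hdisj, sub_eq_add_neg, ← sum_neg_distrib]
  congr 1
  refine sum_congr rfl fun u hu => ?_
  rw [mem_inter, SimpleGraph.mem_neighborFinset] at hu
  obtain ⟨hadj, hus⟩ := hu
  have huv : u ≠ v := hadj.ne'
  have hus' : u ∈ s.erase v := mem_erase.2 ⟨huv, hus⟩
  have hcard2 : ((s.erase v).erase u).card = s.card - 2 := by
    rw [card_erase_of_mem hus', hcard1]; omega
  have hs2 : 2 ≤ s.card := by
    have := Finset.one_lt_card.2 ⟨u, hus, v, hv, huv⟩
    omega
  have hvnotin : ∀ N ∈ mset G ((s.erase v).erase u), s(v, u) ∉ N := by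
    intro N hN hcon
    have := (mem_mset.1 hN).2.1 _ hcon v (Sym2.mem_mk_left v u)
    exact (mem_erase.1 (mem_erase.1 this).2).1 rfl
  rw [mp, ← sum_neg_distrib]
  refine sum_nbij' (fun M => M.erase s(v, u)) (fun N => insert s(v, u) N)
    ?_ ?_ ?_ ?_ ?_
  · -- hi
    intro M hM
    rw [mem_filter] at hM
    obtain ⟨hMm, heM⟩ := hM
    obtain ⟨hsub, hcov, hd⟩ := mem_mset.1 hMm
    refine mem_mset.2 ⟨(erase_subset _ _).trans hsub, ?_, ?_⟩
    · intro f hf w hw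
      obtain ⟨hfne, hfM⟩ := mem_erase.1 hf
      refine mem_erase.2 ⟨?_, mem_erase.2 ⟨?_, hcov f hfM w hw⟩⟩
      · rintro rfl
        exact hd _ heM f hfM (Ne.symm hfne) _ (Sym2.mem_mk_right _ _) hw
      · rintro rfl
        exact hd _ heM f hfM (Ne.symm hfne) _ (Sym2.mem_mk_left _ _) hw
    · intro e he f hf
      exact hd e (mem_of_mem_erase he) f (mem_of_mem_erase hf)
  · -- hj
    intro N hN
    obtain ⟨hsub, hcov, hd⟩ := mem_mset.1 hN
    have hvN : ∀ f ∈ N, v ∉ f ∧ u ∉ f := by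
      intro f hf
      constructor
      · intro hvf
        exact (mem_erase.1 (mem_erase.1 (hcov f hf v hvf)).2).1 rfl
      · intro huf
        exact (mem_erase.1 (hcov f hf u huf)).1 rfl
    refine mem_filter.2 ⟨mem_mset.2 ⟨?_, ?_, ?_⟩, mem_insert_self _ _⟩
    · exact insert_subset (SimpleGraph.mem_edgeFinset.2 (G.mem_edgeSet.2 hadj)) hsub
    · intro f hf w hw
      rcases mem_insert.1 hf with rfl | hfN
      · rcases Sym2.mem_iff.1 hw with rfl | rfl
        exacts [hv, hus]
      · exact mem_of_mem_erase (mem_of_mem_erase (hcov f hfN w hw))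
    · intro e he f hf hef w hw
      rcases mem_insert.1 he with rfl | heN <;> rcases mem_insert.1 hf with rfl | hfN
      · exact absurd rfl hef
      · rcases Sym2.mem_iff.1 hw with rfl | rfl
        exacts [(hvN f hfN).1, (hvN f hfN).2]
      · intro hwf
        rcases Sym2.mem_iff.1 hwf with rfl | rfl
        exacts [(hvN e heN).1 hw, (hvN e heN).2 hw]
      · exact hd e heN f hfN hef w hw
  · -- left_inv
    intro M hM
    exact insert_erase (mem_filter.1 hM).2
  · -- right_inv
    intro N hN
    exact erase_insert (hvnotin N hN)
  · -- values
    intro M hM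
    rw [mem_filter] at hM
    obtain ⟨hMm, heM⟩ := hM
    have hk1 : 1 ≤ M.card := card_pos.2 ⟨_, heM⟩
    have hk2 : 2 * M.card ≤ s.card := two_card_le G hMm
    have hce : (M.erase s(v, u)).card = M.card - 1 := card_erase_of_mem heM
    rw [hce, hcard2]
    have hexp : s.card - 2 * M.card = s.card - 2 - 2 * (M.card - 1) := by omega
    have hsign : ((-1 : ℂ)) ^ M.card = -((-1 : ℂ)) ^ (M.card - 1) := by
      conv_lhs => rw [show M.card = (M.card - 1) + 1 by omega]
      rw [pow_succ]; ring
    rw [hexp, hsign]; ring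

lemma key (G : SimpleGraph V) (z : ℂ) (hz : 0 < z.im) (s : Finset V) :
    mp G s z ≠ 0 ∧ ∀ v ∈ s, 0 < (mp G s z / mp G (s.erase v) z).im := by
  induction s using Finset.strongInduction with
  | _ s ih =>
    have hratio : ∀ v ∈ s, 0 < (mp G s z / mp G (s.erase v) z).im := by
      intro v hv
      have hss : s.erase v ⊂ s := erase_ssubset hv
      obtain ⟨h0', hr'⟩ := ih _ hss
      have hrec := mp_rec G hv z
      have hdiv : mp G s z / mp G (s.erase v) z
          = z - ∑ u ∈ G.neighborFinset v ∩ s,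
              mp G ((s.erase v).erase u) z / mp G (s.erase v) z := by
        rw [hrec, sub_div, mul_div_assoc, div_self h0', mul_one, sum_div]
      rw [hdiv]
      rw [Complex.sub_im, Complex.im_sum]
      have hterm : ∀ u ∈ G.neighborFinset v ∩ s,
          (mp G ((s.erase v).erase u) z / mp G (s.erase v) z).im ≤ 0 := by
        intro u hu
        rw [mem_inter, SimpleGraph.mem_neighborFinset] at hu
        obtain ⟨hadj, hus⟩ := hu
        have hus' : u ∈ s.erase v := mem_erase.2 ⟨hadj.ne', hus⟩
        have hw := hr' u hus'
        set w := mp G (s.erase v) z / mp G ((s.erase v).erase u) z with hwdef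
        have hw0 : w ≠ 0 := by
          intro h; rw [h] at hw; simp at hw
        have h0'' : mp G ((s.erase v).erase u) z ≠ 0 :=
          (ih _ ((erase_ssubset hus').trans hss)).1
        have : mp G ((s.erase v).erase u) z / mp G (s.erase v) z = w⁻¹ := by
          rw [hwdef, ← one_div, one_div_div]
        rw [this, Complex.inv_im]
        have hnsq : 0 < Complex.normSq w := Complex.normSq_pos.2 hw0
        have : -w.im / Complex.normSq w < 0 := by
          apply div_neg_of_neg_of_pos _ hnsq
          linarith
        linarith
      have hsum : ∑ u ∈ G.neighborFinset v ∩ s,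
          (mp G ((s.erase v).erase u) z / mp G (s.erase v) z).im ≤ 0 :=
        sum_nonpos hterm
      linarith
    refine ⟨?_, hratio⟩
    rcases s.eq_empty_or_nonempty with rfl | ⟨v, hv⟩
    · rw [mp_empty]; exact one_ne_zero
    · intro h
      have := hratio v hv
      rw [h, zero_div] at this
      simp at this
lemma mp_univ_eq (G : SimpleGraph V) (z : ℂ) :
    matchingPolyEval G z = mp G Finset.univ z := by
  classical
  rw [mp, matchingPolyEval]
  rw [← Finset.sum_fiberwise_of_maps_to (g := fun M : Finset (Sym2 V) => M.card)
    (t := Finset.range (Fintype.card V / 2 + 1)) ?_]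
  · refine sum_congr rfl fun k _ => ?_
    have hfil : (mset G Finset.univ).filter (fun M => M.card = k)
        = (G.edgeFinset.powersetCard k).filter
          (fun M => ∀ e ∈ M, ∀ f ∈ M, e ≠ f → ∀ v : V, v ∈ e → v ∉ f) := by
      ext M
      simp only [mset, mem_filter, mem_powerset, mem_powersetCard, mem_univ]
      tauto
    rw [sum_congr rfl (fun M hM => by
      rw [(mem_filter.1 hM).2]), sum_const, hfil]
    simp only [matchingCount, Finset.card_univ, nsmul_eq_mul]
    ring
  · intro M hM
    have := two_card_le G hM
    rw [Finset.mem_range]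
    rw [Finset.card_univ] at this
    show M.card < Fintype.card V / 2 + 1
    omega

theorem matchingPoly_conj (G : SimpleGraph V) (z : ℂ) :
    matchingPolyEval G ((starRingEnd ℂ) z) = (starRingEnd ℂ) (matchingPolyEval G z) := by
  rw [matchingPolyEval, matchingPolyEval, map_sum]
  refine sum_congr rfl fun k _ => ?_
  simp [map_mul, map_pow]


end HLaux

/-- Heilmann–Lieb real-rootedness: every (complex) root of the matching polynomial of a
finite graph is real. -/
theorem matchingPoly_roots_real {V : Type} [Fintype V] [DecidableEq V]
    (G : SimpleGraph V) (z : ℂ) (hz : matchingPolyEval G z = 0) : z.im = 0 := by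
  by_contra him
  rcases lt_or_gt_of_ne him with hlt | hgt
  · have h2 : 0 < ((starRingEnd ℂ) z).im := by simpa using by linarith
    have h3 : matchingPolyEval G ((starRingEnd ℂ) z) = 0 := by
      rw [HLaux.matchingPoly_conj, hz, map_zero]
    rw [HLaux.mp_univ_eq] at h3
    exact (HLaux.key G _ h2 Finset.univ).1 h3
  · have h3 := hz
    rw [HLaux.mp_univ_eq] at h3
    exact (HLaux.key G z hgt Finset.univ).1 h3
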